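/- arXiv:0910.2511 — 3 statements merged into one kernel-verified Lean document; each statement's English description precedes it below -/
import Mathlib

section
/- Let λ ≥ 0 and let u be a complex-valued function that is continuous on the closed unit disc {z ∈ ℂ : |z| ≤ 1} and holomorphic on the open unit disc, with u(0) = 1 and |u(z)| ≤ e^λ for all |z| ≤ 1. Then for any real numbers 0 < r < R < 1, the number of zeros of u in the open disc {|z| < r}, counted with multiplicity, is at most λ / log(R/r). -/
open Metric Filter
open scoped Classical Topology

/-- The order of vanishing of `u` at `z` (as a natural number), defined to be the
`AnalyticAt.order` when `u` is analytic at `z` and finite, and junk value `0` otherwise. -/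
noncomputable def zeroMultiplicity (u : ℂ → ℂ) (z : ℂ) : ℕ :=
  if h : AnalyticAt ℂ u z then (analyticOrderAt u z).toNat else 0

lemma order_congr' {f g : ℂ → ℂ} {z : ℂ} (hf : AnalyticAt ℂ f z)
    (hg : AnalyticAt ℂ g z) (h : f =ᶠ[𝓝 z] g) : analyticOrderAt f z = analyticOrderAt g z := by
  rcases eq_or_ne (analyticOrderAt f z) ⊤ with ht | ht
  · rw [ht, eq_comm, analyticOrderAt_eq_top]
    rw [analyticOrderAt_eq_top] at ht
    filter_upwards [ht, h] with w hw hw'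
    rw [← hw']; exact hw
  · obtain ⟨n, hn⟩ := WithTop.ne_top_iff_exists.mp ht
    obtain ⟨p, hp, hp0, hpe⟩ := (hf.analyticOrderAt_eq_natCast (n := n)).mp hn.symm
    have : analyticOrderAt g z = n := by
      rw [hg.analyticOrderAt_eq_natCast]
      refine ⟨p, hp, hp0, ?_⟩
      filter_upwards [hpe, h] with w hw hw'
      rw [← hw']; exact hw
    rw [this]; exact hn.symm
  

lemma zeroMultiplicity_congr {f g : ℂ → ℂ} {z : ℂ} (h : f =ᶠ[𝓝 z] g) :
    zeroMultiplicity f z = zeroMultiplicity g z := by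
  unfold zeroMultiplicity
  by_cases hf : AnalyticAt ℂ f z
  · have hg : AnalyticAt ℂ g z := hf.congr h
    rw [dif_pos hf, dif_pos hg, order_congr' hf hg h]
  · have hg : ¬ AnalyticAt ℂ g z := fun hg => hf (hg.congr h.symm)
    rw [dif_neg hf, dif_neg hg]

lemma zeroMultiplicity_mul {f g : ℂ → ℂ} {z : ℂ} (hf : AnalyticAt ℂ f z)
    (hg : AnalyticAt ℂ g z) (hgz : g z ≠ 0) :
    zeroMultiplicity (fun w => f w * g w) z = zeroMultiplicity f z := by
  have hfg : AnalyticAt ℂ (fun w => f w * g w) z := hf.mul hg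
  unfold zeroMultiplicity
  rw [dif_pos hfg, dif_pos hf]
  rcases eq_or_ne (analyticOrderAt f z) ⊤ with ht | ht
  · have h2 : analyticOrderAt (fun w => f w * g w) z = ⊤ := by
      rw [analyticOrderAt_eq_top]
      rw [analyticOrderAt_eq_top] at ht
      filter_upwards [ht] with w hw
      rw [hw, zero_mul]
    rw [h2, ht]
  · obtain ⟨n, hn⟩ := WithTop.ne_top_iff_exists.mp ht
    obtain ⟨p, hp, hp0, hpe⟩ := (hf.analyticOrderAt_eq_natCast (n := n)).mp hn.symm
    have h2 : analyticOrderAt (fun w => f w * g w) z = n := by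
      rw [hfg.analyticOrderAt_eq_natCast]
      refine ⟨fun w => p w * g w, hp.mul hg, mul_ne_zero hp0 hgz, ?_⟩
      filter_upwards [hpe] with w hw
      rw [hw, smul_eq_mul, smul_eq_mul]; ring
    rw [h2, ← hn]; rfl

lemma analyticAt_dslope {f : ℂ → ℂ} {z₀ : ℂ} (hf : AnalyticAt ℂ f z₀) :
    AnalyticAt ℂ (dslope f z₀) z₀ := by
  obtain ⟨p, hp⟩ := hf
  exact ⟨p.fslope, hp.has_fpower_series_dslope_fslope⟩

lemma zeroMultiplicity_dslope_self {f : ℂ → ℂ} {z₀ : ℂ} (hf : AnalyticAt ℂ f z₀) {k : ℕ}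
    (hk : analyticOrderAt f z₀ = ((k + 1 : ℕ) : ℕ∞)) :
    zeroMultiplicity (dslope f z₀) z₀ = k := by
  obtain ⟨g, hg, hg0, hge⟩ := (hf.analyticOrderAt_eq_natCast (n := k + 1)).mp hk
  have hd : AnalyticAt ℂ (dslope f z₀) z₀ := analyticAt_dslope hf
  have hf0 : f z₀ = 0 := by
    have := hge.self_of_nhds
    simpa using this
  have hφ : AnalyticAt ℂ (fun w => (w - z₀) ^ k * g w) z₀ :=
    ((analyticAt_id.sub analyticAt_const).pow k).mul hg
  have heq : dslope f z₀ =ᶠ[𝓝 z₀] fun w => (w - z₀) ^ k * g w := by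
    apply (AnalyticAt.frequently_eq_iff_eventually_eq hd hφ).mp
    apply Filter.Eventually.frequently
    rw [eventually_nhdsWithin_iff]
    filter_upwards [hge] with w hw hwne
    have hwz : w ≠ z₀ := hwne
    rw [dslope_of_ne f hwz, slope_def_field, hf0, sub_zero, hw, smul_eq_mul, pow_succ]
    field_simp [sub_ne_zero.mpr hwz]
  have h2 : analyticOrderAt (dslope f z₀) z₀ = k := by
    rw [hd.analyticOrderAt_eq_natCast]
    refine ⟨g, hg, hg0, ?_⟩
    filter_upwards [heq] with w hw
    rw [hw, smul_eq_mul]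
  unfold zeroMultiplicity
  rw [dif_pos hd, h2]
  simp

lemma zeroMultiplicity_dslope_ne {f : ℂ → ℂ} {z₀ z : ℂ} (hz : z ≠ z₀)
    (hf : AnalyticAt ℂ f z) (hf0 : f z₀ = 0) :
    zeroMultiplicity (dslope f z₀) z = zeroMultiplicity f z := by
  have heq : dslope f z₀ =ᶠ[𝓝 z] fun w => f w * (w - z₀)⁻¹ := by
    filter_upwards [eventually_ne_nhds hz] with w hw
    rw [dslope_of_ne f hw, slope_def_field, hf0, sub_zero, div_eq_mul_inv]
  rw [zeroMultiplicity_congr heq]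
  exact zeroMultiplicity_mul hf
    ((analyticAt_id.sub analyticAt_const).inv (sub_ne_zero.mpr hz))
    (inv_ne_zero (sub_ne_zero.mpr hz))

lemma aux_bound (r R : ℝ) (hr : 0 < r) (hrR : r < R) (hR : R < 1) (M : ℝ) (hM : 0 ≤ M) :
    ∀ n : ℕ, ∀ u : ℂ → ℂ,
      ContinuousOn u (closedBall (0 : ℂ) 1) → DifferentiableOn ℂ u (ball (0 : ℂ) 1) →
      (∀ z ∈ sphere (0 : ℂ) R, ‖u z‖ ≤ M) →
      ∀ s : Finset ℂ, (∀ z ∈ s, ‖z‖ < r) →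
      (n ≤ ∑ z ∈ s, zeroMultiplicity u z) →
      ‖u 0‖ ≤ M * (r / R) ^ n := by
  have hR0 : (0 : ℝ) < R := hr.trans hrR
  intro n
  induction n with
  | zero =>
    intro u hc hd hb s hs hsum
    rw [pow_zero, mul_one]
    refine Complex.norm_le_of_forall_mem_frontier_norm_le (isBounded_ball (x := (0:ℂ)) (r := R))
      ⟨hd.mono (ball_subset_ball hR.le), hc.mono ?_⟩ ?_ ?_
    · rw [closure_ball (0 : ℂ) hR0.ne']
      exact closedBall_subset_closedBall hR.le
    · intro z hz
      rw [frontier_ball (0 : ℂ) hR0.ne'] at hz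
      exact hb z hz
    · exact subset_closure (mem_ball_self hR0)
  | succ n ih =>
    intro u hc hd hb s hs hsum
    -- find a zero z₀ of positive multiplicity
    have hex : ∃ z₀ ∈ s, 1 ≤ zeroMultiplicity u z₀ := by
      by_contra hcon
      push_neg at hcon
      have : ∑ z ∈ s, zeroMultiplicity u z = 0 :=
        Finset.sum_eq_zero fun z hz => Nat.lt_one_iff.mp (hcon z hz)
      omega
    obtain ⟨z₀, hz₀s, hz₀m⟩ := hex
    have hz₀r : ‖z₀‖ < r := hs z₀ hz₀s
    have hz₀b : z₀ ∈ ball (0 : ℂ) 1 := by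
      rw [mem_ball, dist_zero_right]
      exact hz₀r.trans (hrR.trans hR)
    have hu_an : AnalyticAt ℂ u z₀ := hd.analyticAt (isOpen_ball.mem_nhds hz₀b)
    have hmult : zeroMultiplicity u z₀ = (analyticOrderAt u z₀).toNat := by
      unfold zeroMultiplicity; rw [dif_pos hu_an]
    have hne : analyticOrderAt u z₀ ≠ ⊤ := by
      intro h
      rw [hmult, h] at hz₀m
      simp at hz₀m
    obtain ⟨k, hk⟩ : ∃ k : ℕ, analyticOrderAt u z₀ = ((k + 1 : ℕ) : ℕ∞) := by
      refine ⟨(analyticOrderAt u z₀).toNat - 1, ?_⟩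
      rw [hmult] at hz₀m
      have h1 : (analyticOrderAt u z₀).toNat - 1 + 1 = (analyticOrderAt u z₀).toNat := by omega
      rw [h1, ENat.coe_toNat hne]
    have hmk : zeroMultiplicity u z₀ = k + 1 := by
      rw [hmult, hk]; rfl
    obtain ⟨g, hg_an, hg0, hg_eq⟩ := (hu_an.analyticOrderAt_eq_natCast (n := k + 1)).mp hk
    have hu0' : u z₀ = 0 := by
      have := hg_eq.self_of_nhds
      simpa using this
    -- the auxiliary function v
    set c : ℂ := (starRingEnd ℂ) z₀ with hc_def
    set q : ℂ → ℂ := fun z => ((R : ℂ) ^ 2 - c * z) / R with hq_def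
    set v : ℂ → ℂ := fun z => dslope u z₀ z * q z with hv_def
    have hRne : (R : ℂ) ≠ 0 := by
      simpa using hR0.ne'
    have hq_an : ∀ z : ℂ, AnalyticAt ℂ q z := fun z =>
      (analyticAt_const.sub (analyticAt_const.mul analyticAt_id)).div analyticAt_const hRne
    have hq_ne : ∀ z : ℂ, ‖z‖ < r → q z ≠ 0 := by
      intro z hzr
      have h1 : ‖c * z‖ < R ^ 2 := by
        rw [norm_mul, hc_def, Complex.norm_conj]
        calc ‖z₀‖ * ‖z‖ ≤ r * r := by
              apply mul_le_mul hz₀r.le hzr.le (norm_nonneg z) hr.le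
          _ < R ^ 2 := by nlinarith
      have h2 : (R : ℂ) ^ 2 - c * z ≠ 0 := by
        intro h
        have : (R : ℂ) ^ 2 = c * z := by linear_combination h
        rw [← this] at h1
        simp only [← Complex.ofReal_pow, Complex.norm_real, Real.norm_eq_abs] at h1
        rw [abs_of_nonneg (by positivity)] at h1
        exact lt_irrefl _ h1
      exact div_ne_zero h2 hRne
    have hnb1 : closedBall (0 : ℂ) 1 ∈ 𝓝 z₀ :=
      mem_nhds_iff.mpr ⟨ball (0 : ℂ) 1, ball_subset_closedBall, isOpen_ball, hz₀b⟩
    have hd_cont : ContinuousOn (dslope u z₀) (closedBall (0 : ℂ) 1) :=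
      (continuousOn_dslope hnb1).mpr ⟨hc, hd.differentiableAt (isOpen_ball.mem_nhds hz₀b)⟩
    have hq_cont : Continuous q := by
      apply Continuous.div_const
      exact continuous_const.sub (continuous_const.mul continuous_id)
    have hv_cont : ContinuousOn v (closedBall (0 : ℂ) 1) :=
      hd_cont.mul hq_cont.continuousOn
    have hd_diff : DifferentiableOn ℂ (dslope u z₀) (ball (0 : ℂ) 1) :=
      (Complex.differentiableOn_dslope (isOpen_ball.mem_nhds hz₀b)).mpr hd
    have hq_diff : Differentiable ℂ q :=
      ((differentiable_const _).sub ((differentiable_const _).mul differentiable_id)).div_const _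
    have hv_diff : DifferentiableOn ℂ v (ball (0 : ℂ) 1) :=
      hd_diff.mul hq_diff.differentiableOn
    -- bound for v on the sphere of radius R
    have hv_bd : ∀ z ∈ sphere (0 : ℂ) R, ‖v z‖ ≤ M := by
      intro z hz
      have hzR : ‖z‖ = R := by
        rwa [mem_sphere_iff_norm, sub_zero] at hz
      have hzne : z ≠ z₀ := by
        intro h
        rw [h] at hzR
        exact absurd hzR (by linarith)
      have hzsub : ‖z - z₀‖ ≠ 0 := by
        simpa [sub_eq_zero] using hzne
      have hkey : ‖(R : ℂ) ^ 2 - c * z‖ = R * ‖z - z₀‖ := by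
        have h1 : (R : ℂ) ^ 2 - c * z = (starRingEnd ℂ) (z - z₀) * z := by
          rw [map_sub, sub_mul, hc_def]
          have h2 : (starRingEnd ℂ) z * z = ((R : ℝ) ^ 2 : ℂ) := by
            rw [mul_comm, Complex.mul_conj, Complex.normSq_eq_norm_sq, hzR]
            push_cast
            ring
          rw [h2]
        rw [h1, norm_mul, Complex.norm_conj, hzR, mul_comm]
      have hvz : ‖v z‖ = ‖u z‖ := by
        rw [hv_def]
        simp only []
        rw [dslope_of_ne u hzne, slope_def_field, hu0', sub_zero, hq_def]
        simp only []
        rw [norm_mul, norm_div, norm_div, hkey]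
        rw [Complex.norm_real, Real.norm_eq_abs, abs_of_nonneg hR0.le]
        field_simp
      rw [hvz]
      exact hb z hz
    -- multiplicities of v
    have hv_mult : ∀ z ∈ s, zeroMultiplicity v z = zeroMultiplicity (dslope u z₀) z := by
      intro z hzs
      have hzb : z ∈ ball (0 : ℂ) 1 := by
        rw [mem_ball, dist_zero_right]
        exact (hs z hzs).trans (hrR.trans hR)
      exact zeroMultiplicity_mul (hd_diff.analyticAt (isOpen_ball.mem_nhds hzb))
        (hq_an z) (hq_ne z (hs z hzs))
    have hsum_v : n ≤ ∑ z ∈ s, zeroMultiplicity v z := by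
      have h1 : ∑ z ∈ s, zeroMultiplicity v z
          = zeroMultiplicity v z₀ + ∑ z ∈ s.erase z₀, zeroMultiplicity v z :=
        (Finset.add_sum_erase s _ hz₀s).symm
      have h2 : ∑ z ∈ s, zeroMultiplicity u z
          = zeroMultiplicity u z₀ + ∑ z ∈ s.erase z₀, zeroMultiplicity u z :=
        (Finset.add_sum_erase s _ hz₀s).symm
      have h3 : ∑ z ∈ s.erase z₀, zeroMultiplicity v z
          = ∑ z ∈ s.erase z₀, zeroMultiplicity u z := by
        apply Finset.sum_congr rfl
        intro z hz
        obtain ⟨hzne, hzs⟩ := Finset.mem_erase.mp hz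
        have hzb : z ∈ ball (0 : ℂ) 1 := by
          rw [mem_ball, dist_zero_right]
          exact (hs z hzs).trans (hrR.trans hR)
        rw [hv_mult z hzs, zeroMultiplicity_dslope_ne hzne
          (hd.analyticAt (isOpen_ball.mem_nhds hzb)) hu0']
      have h4 : zeroMultiplicity v z₀ = k := by
        rw [hv_mult z₀ hz₀s, zeroMultiplicity_dslope_self hu_an hk]
      rw [h1, h3, h4]
      rw [h2, hmk] at hsum
      omega
    -- apply the induction hypothesis
    have hv0 : ‖v 0‖ ≤ M * (r / R) ^ n := ih v hv_cont hv_diff hv_bd s hs hsum_v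
    by_cases hz₀0 : z₀ = 0
    · have : ‖u 0‖ = 0 := by
        rw [← hz₀0, hu0', norm_zero]
      rw [this]
      positivity
    · have hvz0 : ‖v 0‖ = ‖u 0‖ / ‖z₀‖ * R := by
        rw [hv_def]
        simp only []
        rw [dslope_of_ne u (show (0:ℂ) ≠ z₀ from fun h => hz₀0 h.symm), slope_def_field,
          hu0', sub_zero, hq_def]
        simp only []
        rw [mul_zero, sub_zero, zero_sub, norm_mul, norm_div, norm_div, norm_neg]
        rw [Complex.norm_real, Real.norm_eq_abs, abs_of_nonneg hR0.le]
        rw [sq, ← Complex.ofReal_mul, Complex.norm_real, Real.norm_eq_abs, abs_of_nonneg (by positivity)]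
        field_simp
      have habsz₀ : 0 < ‖z₀‖ := by
        simpa [norm_pos_iff] using hz₀0
      have : ‖u 0‖ = ‖v 0‖ * ‖z₀‖ / R := by
        rw [hvz0]; field_simp
      rw [this, pow_succ]
      rw [div_le_iff₀ hR0]
      calc ‖v 0‖ * ‖z₀‖ ≤ (M * (r / R) ^ n) * r := by
            apply mul_le_mul hv0 hz₀r.le (norm_nonneg _) (by positivity)
        _ = M * ((r / R) ^ n * (r / R)) * R := by field_simp

/-- **Counting zeros of a bounded holomorphic function.**
If `u` is continuous on the closed unit disc, holomorphic on the open unit disc,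
`u 0 = 1`, and `|u| ≤ exp λ` on the closed unit disc, then for `0 < r < R < 1` the number of
zeros of `u` in `{|z| < r}`, counted with multiplicity, is at most `λ / log (R / r)`. -/
theorem count_zeros_le_of_bounded (lam : ℝ) (hlam : 0 ≤ lam) (u : ℂ → ℂ)
    (hcont : ContinuousOn u (closedBall (0 : ℂ) 1))
    (hhol : DifferentiableOn ℂ u (ball (0 : ℂ) 1))
    (hu0 : u 0 = 1)
    (hbd : ∀ z ∈ closedBall (0 : ℂ) 1, ‖u z‖ ≤ Real.exp lam)
    (r R : ℝ) (hr : 0 < r) (hrR : r < R) (hR : R < 1) :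
    ∃ hfin : {z : ℂ | ‖z‖ < r ∧ u z = 0}.Finite,
      ((∑ z ∈ hfin.toFinset, zeroMultiplicity u z : ℕ) : ℝ) ≤ lam / Real.log (R / r) := by
  have hr1 : r < 1 := hrR.trans hR
  set Z' : Set ℂ := closedBall (0 : ℂ) r ∩ u ⁻¹' {0} with hZ'
  have hsub1 : closedBall (0 : ℂ) r ⊆ ball (0 : ℂ) 1 := closedBall_subset_ball hr1
  have huan : AnalyticOnNhd ℂ u (ball (0 : ℂ) 1) := hhol.analyticOnNhd isOpen_ball
  have hnotev : ∀ z ∈ ball (0 : ℂ) 1, ¬ (∀ᶠ w in 𝓝 z, u w = 0) := by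
    intro z hz hev
    have heq := huan.eqOn_zero_of_preconnected_of_eventuallyEq_zero
      (convex_ball (0 : ℂ) 1).isPreconnected hz hev
    have h0 : u 0 = 0 := heq (mem_ball_self one_pos)
    rw [hu0] at h0
    exact one_ne_zero h0
  have hdisj : ∀ x : ℂ, Disjoint (𝓝[≠] x) (Filter.principal Z') := by
    intro x
    rw [Filter.disjoint_principal_right]
    by_cases hx : x ∈ closedBall (0 : ℂ) r
    · have hxb : x ∈ ball (0 : ℂ) 1 := hsub1 hx
      have hne : ∀ᶠ w in 𝓝[≠] x, u w ≠ 0 :=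
        ((huan x hxb).eventually_eq_zero_or_eventually_ne_zero).resolve_left (hnotev x hxb)
      filter_upwards [hne] with w hw hwZ
      exact hw hwZ.2
    · refine Filter.Eventually.filter_mono nhdsWithin_le_nhds ?_
      filter_upwards [(isClosed_closedBall (x := (0:ℂ)) (ε := r)).isOpen_compl.mem_nhds hx] with w hw hwZ
      exact hw hwZ.1
  obtain ⟨hcl, hdis⟩ := isClosed_and_discrete_iff.mpr hdisj
  have hcpt : IsCompact Z' :=
    IsCompact.of_isClosed_subset (isCompact_closedBall (0 : ℂ) r) hcl Set.inter_subset_left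
  have hfinZ' : Z'.Finite := hcpt.finite hdis
  have hfin : {z : ℂ | ‖z‖ < r ∧ u z = 0}.Finite := by
    refine hfinZ'.subset ?_
    rintro z ⟨hz1, hz2⟩
    exact ⟨by rw [mem_closedBall, dist_zero_right]; exact hz1.le, hz2⟩
  refine ⟨hfin, ?_⟩
  set N := ∑ z ∈ hfin.toFinset, zeroMultiplicity u z with hN
  have hsphere : ∀ z ∈ sphere (0 : ℂ) R, ‖u z‖ ≤ Real.exp lam := by
    intro z hz
    refine hbd z ?_
    rw [mem_sphere_iff_norm, sub_zero] at hz
    rw [mem_closedBall, dist_zero_right, hz]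
    exact hR.le
  have hmem : ∀ z ∈ hfin.toFinset, ‖z‖ < r := by
    intro z hz
    exact (hfin.mem_toFinset.mp hz).1
  have key := aux_bound r R hr hrR hR (Real.exp lam) (Real.exp_nonneg lam) N u hcont hhol
    hsphere hfin.toFinset hmem le_rfl
  rw [hu0, norm_one] at key
  have hRr1 : 1 < R / r := (one_lt_div hr).mpr hrR
  have hlogpos : 0 < Real.log (R / r) := Real.log_pos hRr1
  rw [le_div_iff₀ hlogpos]
  have hinv : (r / R) ^ N = ((R / r) ^ N)⁻¹ := by rw [← inv_pow, inv_div]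
  rw [hinv] at key
  have hpow : (0 : ℝ) < (R / r) ^ N := by positivity
  have h2 : (R / r) ^ N ≤ Real.exp lam := by
    rw [← div_eq_mul_inv, le_div_iff₀ hpow, one_mul] at key
    exact key
  have h4 : Real.log ((R / r) ^ N) ≤ lam := (Real.log_le_iff_le_exp hpow).mpr h2
  rw [Real.log_pow] at h4
  exact_mod_cast h4
end

section
/- Let 0 < r < R < 1 and let z₁, …, z_n ∈ ℂ satisfy |z_j| ≤ R for all j. Then there exists a real number R' ∈ ((r+R)/2, R) such that for every z ∈ ℂ with |z| = R', ∏_{j=1}^{n} |z − z_j| ≥ exp(−4n/(R − r)). -/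
open MeasureTheory Set intervalIntegral

/-- `log` is interval integrable on `[0, p]` for `0 ≤ p ≤ 1`. -/
lemma log_iI_zero (p : ℝ) (hp : 0 ≤ p) (hp1 : p ≤ 1) :
    IntervalIntegrable Real.log volume 0 p := by
  rw [intervalIntegrable_iff_integrableOn_Ioc_of_le hp]
  have hmaj : IntegrableOn (fun x : ℝ => 2 * x ^ (-(1/2) : ℝ)) (Ioc 0 p) volume := by
    have h := intervalIntegral.intervalIntegrable_rpow' (a := 0) (b := p)
      (r := -(1/2)) (by norm_num)
    rw [intervalIntegrable_iff_integrableOn_Ioc_of_le hp] at h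
    exact h.const_mul 2
  refine hmaj.integrable.mono' Real.measurable_log.aestronglyMeasurable ?_
  filter_upwards [ae_restrict_mem measurableSet_Ioc] with x hx
  have hx0 : 0 < x := hx.1
  have hx1 : x ≤ 1 := hx.2.trans hp1
  have hlognp : Real.log x ≤ 0 := Real.log_nonpos hx0.le hx1
  have h1 : Real.log (x ^ (-(1/2) : ℝ)) = (-(1/2)) * Real.log x := Real.log_rpow hx0 _
  have h2 : Real.log (x ^ (-(1/2) : ℝ)) ≤ x ^ (-(1/2) : ℝ) - 1 :=
    Real.log_le_sub_one_of_pos (Real.rpow_pos_of_pos hx0 _)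
  have : ‖Real.log x‖ = -Real.log x := by
    rw [Real.norm_eq_abs, abs_of_nonpos hlognp]
  rw [this]
  nlinarith [Real.rpow_pos_of_pos hx0 (-(1/2) : ℝ)]

lemma log_integral_zero (p : ℝ) (hp : 0 ≤ p) (hp1 : p ≤ 1) :
    ∫ x in (0:ℝ)..p, Real.log x = p * Real.log p - p := by
  rcases eq_or_lt_of_le hp with h | h
  · simp [← h]
  · have hderiv : ∀ x ∈ Ioo (0:ℝ) p,
        HasDerivWithinAt (fun x : ℝ => x * Real.log x - x) (Real.log x) (Ioi x) x := by
      intro x hx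
      have h1 : HasDerivAt (fun x : ℝ => x * Real.log x - x) (Real.log x + 1 - 1) x :=
        (Real.hasDerivAt_mul_log hx.1.ne').sub (hasDerivAt_id x)
      simpa using h1.hasDerivWithinAt
    have := intervalIntegral.integral_eq_sub_of_hasDeriv_right_of_le hp
      ((Real.continuous_mul_log.sub continuous_id).continuousOn) hderiv
      (log_iI_zero p hp hp1)
    simpa using this

/-- Key per-point lemma: integrability and lower bound for `∫ log |t - a|`. -/
lemma key_lemma (u v aa : ℝ) (hu : 0 ≤ u) (huv : u ≤ v) (hv : v ≤ 1)
    (ha0 : 0 ≤ aa) (ha1 : aa ≤ 1) :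
    IntervalIntegrable (fun t => Real.log |t - aa|) volume u v ∧
    (v - u) * (Real.log ((v - u) / 2) - 1) ≤ ∫ t in u..v, Real.log |t - aa| := by
  rcases eq_or_lt_of_le huv with rfl | hL
  · constructor
    · rw [intervalIntegrable_iff]; simp
    · simp
  have hL' : 0 < v - u := by linarith
  rcases le_or_gt aa u with hA | hA
  · -- case aa ≤ u
    have heq : EqOn (fun t => Real.log |t - aa|) (fun t => Real.log (t - aa)) (uIcc u v) := by
      intro t ht
      rw [uIcc_of_le huv] at ht
      simp only [abs_of_nonneg (by linarith [ht.1] : (0:ℝ) ≤ t - aa)]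
    have base : IntervalIntegrable Real.log volume 0 (v - aa) :=
      log_iI_zero _ (by linarith) (by linarith)
    have h2 : IntervalIntegrable Real.log volume (u - aa) (v - aa) :=
      base.mono_set (by
        apply uIcc_subset_uIcc
        · rw [uIcc_of_le (by linarith)]; exact ⟨by linarith, by linarith⟩
        · rw [uIcc_of_le (by linarith)]; exact ⟨by linarith, le_rfl⟩)
    have h3 := h2.comp_sub_right aa
    rw [sub_add_cancel, sub_add_cancel] at h3
    have hint : IntervalIntegrable (fun t => Real.log |t - aa|) volume u v := by
      refine h3.congr ?_
      intro t ht
      exact (heq (uIoc_subset_uIcc ht)).symm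
    refine ⟨hint, ?_⟩
    -- lower bound
    have base2 : IntervalIntegrable Real.log volume 0 (v - u) :=
      log_iI_zero _ (by linarith) (by linarith)
    have h4 := base2.comp_sub_right u
    rw [zero_add, sub_add_cancel] at h4
    have hmono : ∫ t in Ioc u v, Real.log (t - u) ≤ ∫ t in Ioc u v, Real.log |t - aa| := by
      refine setIntegral_mono_on ?_ ?_ measurableSet_Ioc ?_
      · exact (intervalIntegrable_iff_integrableOn_Ioc_of_le huv).1 h4
      · exact (intervalIntegrable_iff_integrableOn_Ioc_of_le huv).1 hint
      · intro t ht
        rw [abs_of_nonneg (by linarith [ht.1] : (0:ℝ) ≤ t - aa)]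
        exact (Real.log_le_log_iff (by linarith [ht.1]) (by linarith [ht.1])).2 (by linarith)
    have hval : ∫ t in u..v, Real.log (t - u) = (v - u) * Real.log (v - u) - (v - u) := by
      rw [intervalIntegral.integral_comp_sub_right (fun x => Real.log x) u]
      simpa using log_integral_zero (v - u) (by linarith) (by linarith)
    have hlog2 : Real.log ((v - u) / 2) ≤ Real.log (v - u) :=
      (Real.log_le_log_iff (by linarith) (by linarith)).2 (by linarith)
    calc (v - u) * (Real.log ((v - u) / 2) - 1)
        ≤ (v - u) * Real.log (v - u) - (v - u) := by nlinarith
      _ = ∫ t in Ioc u v, Real.log (t - u) := by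
          rw [← intervalIntegral.integral_of_le huv, hval]
      _ ≤ ∫ t in Ioc u v, Real.log |t - aa| := hmono
      _ = ∫ t in u..v, Real.log |t - aa| := (intervalIntegral.integral_of_le huv).symm
  rcases le_or_gt v aa with hB | hB
  · -- case v ≤ aa
    have heq : EqOn (fun t => Real.log |t - aa|) (fun t => Real.log (aa - t)) (uIcc u v) := by
      intro t ht
      rw [uIcc_of_le huv] at ht
      simp only [abs_of_nonpos (by linarith [ht.2] : t - aa ≤ 0), neg_sub]
    have base : IntervalIntegrable Real.log volume 0 (aa - u) :=
      log_iI_zero _ (by linarith) (by linarith)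
    have h2 : IntervalIntegrable Real.log volume (aa - v) (aa - u) :=
      base.mono_set (by
        apply uIcc_subset_uIcc
        · rw [uIcc_of_le (by linarith : (0:ℝ) ≤ aa - u)]
          exact ⟨by linarith, by linarith⟩
        · rw [uIcc_of_le (by linarith : (0:ℝ) ≤ aa - u)]
          exact ⟨by linarith, le_rfl⟩)
    have h3 := (h2.comp_sub_left aa).symm
    rw [sub_sub_cancel, sub_sub_cancel] at h3
    have hint : IntervalIntegrable (fun t => Real.log |t - aa|) volume u v := by
      refine h3.congr ?_
      intro t ht
      exact (heq (uIoc_subset_uIcc ht)).symm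
    refine ⟨hint, ?_⟩
    have base2 : IntervalIntegrable Real.log volume (v - u) 0 :=
      (log_iI_zero _ (by linarith) (by linarith)).symm
    have h4 := base2.comp_sub_left v
    rw [sub_sub_cancel, sub_zero] at h4
    have hIoc_Ico : ∫ t in Ioc u v, Real.log |t - aa| = ∫ t in Ico u v, Real.log |t - aa| :=
      setIntegral_congr_set (Ioc_ae_eq_Icc.trans Ico_ae_eq_Icc.symm)
    have hIoc_Ico' : ∫ t in Ioc u v, Real.log (v - t) = ∫ t in Ico u v, Real.log (v - t) :=
      setIntegral_congr_set (Ioc_ae_eq_Icc.trans Ico_ae_eq_Icc.symm)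
    have hmono : ∫ t in Ico u v, Real.log (v - t) ≤ ∫ t in Ico u v, Real.log |t - aa| := by
      refine setIntegral_mono_on ?_ ?_ measurableSet_Ico ?_
      · exact ((intervalIntegrable_iff_integrableOn_Ioc_of_le huv).1 h4).congr_set_ae
          (Ico_ae_eq_Icc.trans Ioc_ae_eq_Icc.symm)
      · exact ((intervalIntegrable_iff_integrableOn_Ioc_of_le huv).1 hint).congr_set_ae
          (Ico_ae_eq_Icc.trans Ioc_ae_eq_Icc.symm)
      · intro t ht
        rw [abs_of_nonpos (by linarith [ht.2] : t - aa ≤ 0), neg_sub]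
        exact (Real.log_le_log_iff (by linarith [ht.2]) (by linarith [ht.2])).2 (by linarith)
    have hval : ∫ t in u..v, Real.log (v - t) = (v - u) * Real.log (v - u) - (v - u) := by
      rw [intervalIntegral.integral_comp_sub_left (fun x => Real.log x) v]
      rw [sub_self]
      exact log_integral_zero (v - u) (by linarith) (by linarith)
    have hlog2 : Real.log ((v - u) / 2) ≤ Real.log (v - u) :=
      (Real.log_le_log_iff (by linarith) (by linarith)).2 (by linarith)
    calc (v - u) * (Real.log ((v - u) / 2) - 1)
        ≤ (v - u) * Real.log (v - u) - (v - u) := by nlinarith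
      _ = ∫ t in Ico u v, Real.log (v - t) := by
          rw [← hIoc_Ico', ← intervalIntegral.integral_of_le huv, hval]
      _ ≤ ∫ t in Ico u v, Real.log |t - aa| := hmono
      _ = ∫ t in u..v, Real.log |t - aa| := by
          rw [← hIoc_Ico, ← intervalIntegral.integral_of_le huv]
  · -- case u < aa < v
    set p := aa - u with hp
    set q := v - aa with hq
    have hp0 : 0 < p := by rw [hp]; linarith
    have hq0 : 0 < q := by rw [hq]; linarith
    have hp1 : p ≤ 1 := by rw [hp]; linarith
    have hq1 : q ≤ 1 := by rw [hq]; linarith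
    -- integrability on [u, aa]
    have base1 : IntervalIntegrable Real.log volume 0 p := log_iI_zero _ hp0.le hp1
    have h1 := (base1.symm.comp_sub_left aa)
    rw [sub_zero] at h1
    have h1' : IntervalIntegrable (fun x => Real.log (aa - x)) volume u aa := by
      have heu : aa - p = u := by rw [hp]; ring
      rw [heu] at h1
      exact h1
    have heq1 : EqOn (fun t => Real.log |t - aa|) (fun t => Real.log (aa - t)) (uIcc u aa) := by
      intro t ht
      rw [uIcc_of_le hA.le] at ht
      simp only [abs_of_nonpos (by linarith [ht.2] : t - aa ≤ 0), neg_sub]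
    have I1 : IntervalIntegrable (fun t => Real.log |t - aa|) volume u aa := by
      refine h1'.congr ?_
      intro t ht
      exact (heq1 (uIoc_subset_uIcc ht)).symm
    -- integrability on [aa, v]
    have base2 : IntervalIntegrable Real.log volume 0 q := log_iI_zero _ hq0.le hq1
    have h2 := base2.comp_sub_right aa
    rw [zero_add] at h2
    have h2' : IntervalIntegrable (fun x => Real.log (x - aa)) volume aa v := by
      have hqv : q + aa = v := by rw [hq]; ring
      rw [hqv] at h2
      exact h2
    have heq2 : EqOn (fun t => Real.log |t - aa|) (fun t => Real.log (t - aa)) (uIcc aa v) := by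
      intro t ht
      rw [uIcc_of_le hB.le] at ht
      simp only [abs_of_nonneg (by linarith [ht.1] : (0:ℝ) ≤ t - aa)]
    have I2 : IntervalIntegrable (fun t => Real.log |t - aa|) volume aa v := by
      refine h2'.congr ?_
      intro t ht
      exact (heq2 (uIoc_subset_uIcc ht)).symm
    refine ⟨I1.trans I2, ?_⟩
    have hsplit : ∫ t in u..v, Real.log |t - aa| =
        (∫ t in u..aa, Real.log |t - aa|) + ∫ t in aa..v, Real.log |t - aa| :=
      (intervalIntegral.integral_add_adjacent_intervals I1 I2).symm
    have hv1 : ∫ t in u..aa, Real.log |t - aa| = p * Real.log p - p := by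
      rw [intervalIntegral.integral_congr heq1]
      rw [intervalIntegral.integral_comp_sub_left (fun x => Real.log x) aa]
      rw [sub_self]
      rw [log_integral_zero (aa - u) (by linarith) (by linarith), hp]
    have hv2 : ∫ t in aa..v, Real.log |t - aa| = q * Real.log q - q := by
      rw [intervalIntegral.integral_congr heq2]
      rw [intervalIntegral.integral_comp_sub_right (fun x => Real.log x) aa]
      rw [sub_self]
      exact log_integral_zero (v - aa) (by linarith) (by linarith)
    -- convexity
    have hconv := Real.convexOn_mul_log.2 (mem_Ici.2 hp0.le) (mem_Ici.2 hq0.le)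
      (by norm_num : (0:ℝ) ≤ 1/2) (by norm_num : (0:ℝ) ≤ 1/2) (by norm_num)
    simp only [smul_eq_mul] at hconv
    have hpq : (1/2 : ℝ) * p + (1/2) * q = (v - u) / 2 := by simp [hp, hq]; ring
    rw [hpq] at hconv
    rw [hsplit, hv1, hv2]
    nlinarith [hconv]

/-- There is a point in `(c, R)`, distinct from all `a j`, where `∑ log |t - a j|` is
at least `M`, provided `M` is below the average. -/
lemma exists_good_point (n : ℕ) (a : Fin n → ℝ) (c R M : ℝ) (hc0 : 0 ≤ c) (hcR : c < R)
    (hR1 : R ≤ 1) (ha0 : ∀ j, 0 ≤ a j) (ha1 : ∀ j, a j ≤ 1)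
    (hM : M * (R - c) < (n : ℝ) * ((R - c) * (Real.log ((R - c) / 2) - 1))) :
    ∃ t ∈ Ioo c R, (∀ j, t ≠ a j) ∧ M ≤ ∑ j, Real.log |t - a j| := by
  have hkey := fun j => key_lemma c R (a j) hc0 hcR.le hR1 (ha0 j) (ha1 j)
  have Fint : IntervalIntegrable (fun t => ∑ j, Real.log |t - a j|) volume c R := by
    rw [← Finset.sum_fn]
    exact IntervalIntegrable.sum Finset.univ (fun j _ => (hkey j).1)
  have Fval : ∫ t in c..R, ∑ j, Real.log |t - a j|
      = ∑ j, ∫ t in c..R, Real.log |t - a j| :=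
    intervalIntegral.integral_finset_sum (μ := volume)
      (f := fun j t => Real.log |t - a j|) (fun j _ => (hkey j).1)
  have Flow : (n : ℝ) * ((R - c) * (Real.log ((R - c) / 2) - 1))
      ≤ ∫ t in c..R, ∑ j, Real.log |t - a j| := by
    rw [Fval]
    have h := Finset.sum_le_sum (fun j (_ : j ∈ Finset.univ) => (hkey j).2)
    calc (n : ℝ) * ((R - c) * (Real.log ((R - c) / 2) - 1))
        = ∑ _j : Fin n, (R - c) * (Real.log ((R - c) / 2) - 1) := by
          rw [Finset.sum_const, Finset.card_univ, Fintype.card_fin, nsmul_eq_mul]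
      _ ≤ _ := h
  set T : Set ℝ := Ioo c R \ Set.range a with hT
  have hTmeas : MeasurableSet T := measurableSet_Ioo.diff (Set.finite_range a).measurableSet
  have hrange0 : volume (Set.range a) = 0 := (Set.finite_range a).measure_zero _
  have hT_ae : T =ᵐ[volume] Ioc c R :=
    (diff_null_ae_eq_self hrange0).trans Ioo_ae_eq_Ioc
  have hex : ∃ t ∈ T, M ≤ ∑ j, Real.log |t - a j| := by
    by_contra hcon
    push_neg at hcon
    have hFT : IntegrableOn (fun t => ∑ j, Real.log |t - a j|) T := by
      have h := (intervalIntegrable_iff_integrableOn_Ioc_of_le hcR.le).1 Fint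
      exact h.mono_set (fun x hx => Ioo_subset_Ioc_self hx.1)
    have hub : (∫ t in T, ∑ j, Real.log |t - a j|) ≤ M * (volume T).toReal := by
      have h := setIntegral_mono_on hFT
        (integrableOn_const (lt_of_le_of_lt (measure_mono
          (fun x hx => Ioo_subset_Ioc_self hx.1)) measure_Ioc_lt_top).ne)
        hTmeas (fun t ht => (hcon t ht).le)
      simpa [setIntegral_const, mul_comm, measureReal_def] using h
    have hvolT : (volume T).toReal = R - c := by
      rw [measure_congr hT_ae, Real.volume_Ioc, ENNReal.toReal_ofReal (by linarith)]
    have hTeq : (∫ t in T, ∑ j, Real.log |t - a j|)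
        = ∫ t in c..R, ∑ j, Real.log |t - a j| := by
      rw [setIntegral_congr_set hT_ae, intervalIntegral.integral_of_le hcR.le]
    rw [hTeq, hvolT] at hub
    linarith
  obtain ⟨t, htT, htF⟩ := hex
  exact ⟨t, htT.1, fun j h => htT.2 ⟨j, h.symm⟩, htF⟩

/-- Given `0 < r < R < 1` and points `z₁, …, z_n` in the closed disc of radius `R`, there is a
radius `R' ∈ ((r+R)/2, R)` such that for every `z` with `|z| = R'`,
`∏_j |z - z_j| ≥ exp (-4n/(R-r))`. -/
theorem exists_radius_prod_dist_ge (r R : ℝ) (hr : 0 < r) (hrR : r < R) (hR : R < 1)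
    (n : ℕ) (z : Fin n → ℂ) (hz : ∀ j, ‖z j‖ ≤ R) :
    ∃ R' ∈ Set.Ioo ((r + R) / 2) R, ∀ w : ℂ, ‖w‖ = R' →
      Real.exp (-(4 * n) / (R - r)) ≤ ∏ j, ‖w - z j‖ := by
  have hcR : (r + R) / 2 < R := by linarith
  rcases Nat.eq_zero_or_pos n with rfl | hn
  · refine ⟨((r + R) / 2 + R) / 2, ⟨by linarith, by linarith⟩, ?_⟩
    intro w hw
    simp
  -- n ≥ 1
  have hx0 : 0 < R - r := by linarith
  have hx1 : R - r < 1 := by linarith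
  have hn' : (1 : ℝ) ≤ (n : ℝ) := by exact_mod_cast hn
  have hn0 : (0 : ℝ) < (n : ℝ) := by linarith
  -- key numeric inequality
  have hu4 : (1 : ℝ) < 4 / (R - r) := by
    rw [lt_div_iff₀ hx0]; linarith
  have hlog : Real.log (4 / (R - r)) < 4 / (R - r) - 1 :=
    Real.log_lt_sub_one_of_pos (by linarith) (by linarith)
  have hlogeq : Real.log ((R - (r + R) / 2) / 2) = - Real.log (4 / (R - r)) := by
    have h1 : (R - (r + R) / 2) / 2 = (R - r) / 4 := by ring
    rw [h1, Real.log_div (by linarith) (by norm_num),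
      Real.log_div (by norm_num) (by linarith)]
    ring
  have hRc : R - (r + R) / 2 = (R - r) / 2 := by ring
  have h5 : (4 / (R - r)) * (R - r) = 4 := div_mul_cancel₀ 4 hx0.ne'
  have hfac : 0 < 4 - (R - r) - Real.log (4 / (R - r)) * (R - r) := by
    nlinarith [mul_lt_mul_of_pos_right hlog hx0]
  have hM : (-(4 * (n : ℝ)) / (R - r)) * (R - (r + R) / 2) <
      (n : ℝ) * ((R - (r + R) / 2) * (Real.log ((R - (r + R) / 2) / 2) - 1)) := by
    rw [hlogeq, hRc, div_mul_eq_mul_div, div_lt_iff₀ hx0]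
    nlinarith [mul_pos (mul_pos hn0 (by linarith : (0:ℝ) < (R - r) / 2)) hfac]
  obtain ⟨t, htI, htne, htF⟩ := exists_good_point n (fun j => ‖z j‖)
    ((r + R) / 2) R (-(4 * (n : ℝ)) / (R - r)) (by linarith) hcR hR.le
    (fun j => norm_nonneg _) (fun j => (hz j).trans hR.le) hM
  refine ⟨t, htI, ?_⟩
  intro w hw
  have hpos : ∀ j, 0 < |t - ‖z j‖| := by
    intro j
    rw [abs_pos, sub_ne_zero]
    exact htne j
  have hexpF : Real.exp (∑ j, Real.log |t - ‖z j‖|)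
      = ∏ j, |t - ‖z j‖| := by
    rw [Real.exp_sum]
    exact Finset.prod_congr rfl (fun j _ => Real.exp_log (hpos j))
  calc Real.exp (-(4 * n) / (R - r))
      ≤ Real.exp (∑ j, Real.log |t - ‖z j‖|) := Real.exp_le_exp.2 htF
    _ = ∏ j, |t - ‖z j‖| := hexpF
    _ ≤ ∏ j, ‖w - z j‖ := by
        refine Finset.prod_le_prod (fun j _ => (hpos j).le) (fun j _ => ?_)
        have h := abs_norm_sub_norm_le w (z j)
        rw [hw] at h
        exact h
end

section
/- Let d ≥ 1 be an integer, A > 0, and ε ∈ (0, d). Then there exists h₀ ∈ (0, e^{−e}) such that for every h ∈ (0, h₀] and every real number F > 1 satisfying F^d · log F = A · log(1/h), one has (d − ε)·A ≤ F^d · (log log(1/h)) / (log(1/h)) ≤ (d + 2ε)·A. -/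
set_option maxHeartbeats 1000000
open Real Filter


/-- Let `d ≥ 1`, `A > 0` and `ε ∈ (0, d)`. Then there is `h₀ ∈ (0, e^{-e})` such that
for every `h ∈ (0, h₀]` and every `F > 1` with `F^d · log F = A · log (1/h)` one has
`(d - ε)·A ≤ F^d · log log (1/h) / log (1/h) ≤ (d + 2ε)·A`. -/
theorem pow_mul_log_solution_asymptotics (d : ℕ) (hd : 1 ≤ d) (A : ℝ) (hA : 0 < A)
    (ε : ℝ) (hε : 0 < ε) (hεd : ε < d) :
    ∃ h₀ ∈ Set.Ioo (0 : ℝ) (Real.exp (-Real.exp 1)), ∀ h ∈ Set.Ioc (0 : ℝ) h₀,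
      ∀ F : ℝ, 1 < F → F ^ d * Real.log F = A * Real.log (1 / h) →
        ((d : ℝ) - ε) * A ≤ F ^ d * Real.log (Real.log (1 / h)) / Real.log (1 / h) ∧
        F ^ d * Real.log (Real.log (1 / h)) / Real.log (1 / h) ≤ ((d : ℝ) + 2 * ε) * A := by
  have hd0 : (0:ℝ) < (d:ℝ) := by exact_mod_cast Nat.lt_of_lt_of_le Nat.zero_lt_one hd
  have hdε : (0:ℝ) < (d:ℝ) - ε := by linarith
  have hdε2 : (0:ℝ) < (d:ℝ) + 2*ε := by linarith
  set δ₁ := ε / ((d:ℝ) - ε) with hδ₁def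
  set δ₂ := 2*ε / ((d:ℝ) + 2*ε) with hδ₂def
  have hδ₁ : 0 < δ₁ := div_pos hε hdε
  have hδ₂ : 0 < δ₂ := div_pos (by linarith) hdε2
  have factA : ∀ᶠ L in atTop, A*((d:ℝ)-ε) ≤ L ^ δ₁ * Real.log L := by
    have := (tendsto_rpow_atTop hδ₁).atTop_mul_atTop₀ Real.tendsto_log_atTop
    exact this.eventually_ge_atTop _
  have factB : ∀ᶠ L in atTop, Real.log L ≤ A*((d:ℝ)+2*ε) * L ^ δ₂ := by
    have ho := isLittleO_log_rpow_atTop hδ₂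
    have hb := ho.def (show (0:ℝ) < A*((d:ℝ)+2*ε) by positivity)
    filter_upwards [hb, eventually_ge_atTop (1:ℝ)] with x hx hx1
    have h1 : (0:ℝ) ≤ Real.log x := Real.log_nonneg hx1
    have h2 : (0:ℝ) ≤ x ^ δ₂ := Real.rpow_nonneg (by linarith) _
    simpa [Real.norm_eq_abs, abs_of_nonneg h1, abs_of_nonneg h2] using hx
  obtain ⟨L₁, hL₁⟩ := eventually_atTop.1 (factA.and factB)
  set L₀ := max L₁ (Real.exp 1 + 1) with hL₀def
  have hL₀e : Real.exp 1 + 1 ≤ L₀ := le_max_right _ _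
  refine ⟨Real.exp (-L₀), ⟨Real.exp_pos _, ?_⟩, ?_⟩
  · exact Real.exp_lt_exp.2 (by linarith)
  intro h hh F hF heq
  obtain ⟨hh0, hhle⟩ := hh
  set L := Real.log (1/h) with hLdef
  -- L ≥ L₀
  have hLge : L₀ ≤ L := by
    have hlh : Real.log h ≤ -L₀ := by
      have := Real.log_le_log hh0 hhle
      simpa [Real.log_exp] using this
    have : L = -Real.log h := by rw [hLdef, one_div, Real.log_inv]
    linarith
  have he2 : (2:ℝ) ≤ Real.exp 1 := by
    have := Real.add_one_le_exp (1:ℝ); linarith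
  have hLpos : (0:ℝ) < L := by linarith
  have hL1 : (1:ℝ) < L := by linarith
  set LL := Real.log L with hLLdef
  have hLL1 : (1:ℝ) ≤ LL := by
    rw [hLLdef, ← Real.log_exp (1:ℝ)]
    exact Real.log_le_log (Real.exp_pos _) (by linarith)
  have hLLpos : (0:ℝ) < LL := by linarith
  obtain ⟨hfA, hfB⟩ := hL₁ L (le_trans (le_max_left _ _) hLge)
  set t := Real.log F with htdef
  have ht : 0 < t := Real.log_pos hF
  have hFexp : F ^ d = Real.exp ((d:ℝ) * t) := by
    rw [htdef, ← Real.exp_log (show (0:ℝ) < F by linarith)]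
    rw [Real.log_exp, ← Real.exp_nat_mul]
  have heq' : Real.exp ((d:ℝ)*t) * t = A * L := by rw [← hFexp]; exact heq
  have hrpow1 : L ^ δ₁ = Real.exp (LL * δ₁) := by
    rw [Real.rpow_def_of_pos hLpos, hLLdef]
  have hrpow2 : L ^ δ₂ = Real.exp (LL * δ₂) := by
    rw [Real.rpow_def_of_pos hLpos, hLLdef]
  have hLexp : L = Real.exp LL := (Real.exp_log hLpos).symm
  have hrp1pos : (0:ℝ) < L ^ δ₁ := Real.rpow_pos_of_pos hLpos _
  have hrp2pos : (0:ℝ) < L ^ δ₂ := Real.rpow_pos_of_pos hLpos _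
  -- key1 : (d-ε)*t ≤ LL
  have key1 : ((d:ℝ)-ε)*t ≤ LL := by
    by_contra hcon
    push_neg at hcon
    have e1 : L < Real.exp (((d:ℝ)-ε)*t) := by
      rw [hLexp]; exact Real.exp_lt_exp.2 hcon
    have e2 : L ^ δ₁ < Real.exp (ε*t) := by
      rw [hrpow1]
      apply Real.exp_lt_exp.2
      rw [hδ₁def]
      rw [mul_div_assoc', div_lt_iff₀ hdε]
      nlinarith
    have ht1 : LL/((d:ℝ)-ε) < t := (div_lt_iff₀ hdε).2 (by linarith [mul_comm t ((d:ℝ)-ε)])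
    have s1 : L * L ^ δ₁ < Real.exp (((d:ℝ)-ε)*t) * Real.exp (ε*t) :=
      mul_lt_mul'' e1 e2 hLpos.le hrp1pos.le
    have s2 : (L * L ^ δ₁) * (LL/((d:ℝ)-ε)) < (Real.exp (((d:ℝ)-ε)*t) * Real.exp (ε*t)) * t :=
      mul_lt_mul'' s1 ht1 (by positivity) (by positivity)
    have esplit : Real.exp (((d:ℝ)-ε)*t) * Real.exp (ε*t) = Real.exp ((d:ℝ)*t) := by
      rw [← Real.exp_add]; ring_nf
    rw [esplit, heq'] at s2
    -- s2 : L * L^δ₁ * (LL/(d-ε)) < A * L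
    have s3 : L ^ δ₁ * LL < A * ((d:ℝ)-ε) := by
      have s4 : L * (L ^ δ₁ * LL) < L * (A * ((d:ℝ)-ε)) := by
        have := (mul_lt_mul_iff_of_pos_right hdε).2 s2
        calc L * (L ^ δ₁ * LL) = (L * L ^ δ₁ * (LL/((d:ℝ)-ε))) * ((d:ℝ)-ε) := by
              field_simp
          _ < (A * L) * ((d:ℝ)-ε) := this
          _ = L * (A * ((d:ℝ)-ε)) := by ring
      exact lt_of_mul_lt_mul_left s4 hLpos.le
    linarith
  -- key2 : LL ≤ (d+2ε)*t
  have key2 : LL ≤ ((d:ℝ)+2*ε)*t := by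
    by_contra hcon
    push_neg at hcon
    have ht2 : t < LL/((d:ℝ)+2*ε) := (lt_div_iff₀ hdε2).2 (by linarith [mul_comm t ((d:ℝ)+2*ε)])
    have hsum : (d:ℝ)*t + LL*δ₂ < LL := by
      have hδeq : LL*δ₂ = LL*(2*ε)/((d:ℝ)+2*ε) := by rw [hδ₂def]; ring
      have h' : LL*(2*ε)/((d:ℝ)+2*ε) < LL - (d:ℝ)*t := by
        rw [div_lt_iff₀ hdε2]; nlinarith
      linarith [hδeq ▸ h']
    have e3 : Real.exp ((d:ℝ)*t) * L ^ δ₂ < L := by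
      rw [hrpow2, ← Real.exp_add, hLexp]
      exact Real.exp_lt_exp.2 hsum
    have s : (Real.exp ((d:ℝ)*t) * L ^ δ₂) * t < L * (LL/((d:ℝ)+2*ε)) :=
      mul_lt_mul'' e3 ht2 (by positivity) ht.le
    have s2 : A * L * L ^ δ₂ < L * (LL/((d:ℝ)+2*ε)) := by
      calc A * L * L ^ δ₂ = (Real.exp ((d:ℝ)*t) * L ^ δ₂) * t := by rw [← heq']; ring
        _ < _ := s
    have s3 : A * ((d:ℝ)+2*ε) * L ^ δ₂ < LL := by
      have s4 : L * (A * ((d:ℝ)+2*ε) * L ^ δ₂) < L * LL := by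
        have := (mul_lt_mul_iff_of_pos_right hdε2).2 s2
        calc L * (A * ((d:ℝ)+2*ε) * L ^ δ₂) = (A * L * L ^ δ₂) * ((d:ℝ)+2*ε) := by ring
          _ < (L * (LL/((d:ℝ)+2*ε))) * ((d:ℝ)+2*ε) := this
          _ = L * LL := by field_simp
      exact lt_of_mul_lt_mul_left s4 hLpos.le
    linarith
  -- main identity
  have hmain : F ^ d * LL / L = A * LL / t := by
    rw [div_eq_div_iff hLpos.ne' ht.ne']
    have : F ^ d * t = A * L := heq
    nlinarith [this]
  rw [hmain]
  constructor
  · rw [le_div_iff₀ ht]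
    nlinarith [mul_le_mul_of_nonneg_left key1 hA.le]
  · rw [div_le_iff₀ ht]
    nlinarith [mul_le_mul_of_nonneg_left key2 hA.le]
end
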